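/- arXiv:2601.13159 — 2 statements merged into one kernel-verified Lean document; each statement's English description precedes it below -/
import Mathlib

section
/- Let U be a finite set of pairwise distinct unit vectors in ℝ² with pos(U) = ℝ², and let u ∈ U_□. Then every cone-volume vector γ ∈ C_cv(U) satisfies γ_u ≤ 1/2, where γ_u is the entry of γ corresponding to u. -/
open MeasureTheory
open Set
open scoped ENNReal
open scoped RealInnerProductSpace

noncomputable section

abbrev V2 : Type := EuclideanSpace ℝ (Fin 2)

/-- The positive hull: all nonnegative linear combinations of elements of `M`. -/
def pos {E : Type*} [AddCommMonoid E] [Module ℝ E] (M : Set E) : Set E :=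
  {x | ∃ (s : Finset E) (c : E → ℝ),
    (↑s : Set E) ⊆ M ∧ (∀ v, 0 ≤ c v) ∧ x = ∑ v ∈ s, c v • v}

/-- The polyhedron `P(U,b) = {x : ⟨uᵢ,x⟩ ≤ bᵢ for all i}`. -/
def polyP {m : ℕ} (u : Fin m → V2) (b : Fin m → ℝ) : Set V2 :=
  {x | ∀ i, (inner ℝ (u i) x : ℝ) ≤ b i}

/-- The face of `P(U,b)` with outer normal `uᵢ`. -/
def faceF {m : ℕ} (u : Fin m → V2) (b : Fin m → ℝ) (i : Fin m) : Set V2 :=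
  {x ∈ polyP u b | (inner ℝ (u i) x : ℝ) = b i}

/-- The cone-volume vector of `P(U,b)`: entry `i` is the area of `conv({0} ∪ Fᵢ(b))`. -/
def cv {m : ℕ} (u : Fin m → V2) (b : Fin m → ℝ) : Fin m → ℝ :=
  fun i => (volume (convexHull ℝ (insert 0 (faceF u b i)))).toReal

/-- The cone-volume set `C_cv(U)`. -/
def Ccv {m : ℕ} (u : Fin m → V2) : Set (Fin m → ℝ) :=
  {g | ∃ b : Fin m → ℝ, (∀ i, 0 ≤ b i) ∧
    (volume (polyP u b)).toReal = 1 ∧ g = cv u b}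

/-- The subspace concentration polytope
`P_scc(U) = conv{ (1/2)(eᵢ+eⱼ) : uᵢ, uⱼ linearly independent }`. -/
def Pscc {m : ℕ} (u : Fin m → V2) : Set (Fin m → ℝ) :=
  convexHull ℝ
    {x | ∃ i j, LinearIndependent ℝ ![u i, u j] ∧
      x = (1 / 2 : ℝ) • (Pi.single i 1 + Pi.single j 1)}

/-- Indices `i` with `uᵢ ∈ U_Δ`: some triple containing `uᵢ` positively spans `ℝ²`. -/
def DeltaIdx {m : ℕ} (u : Fin m → V2) : Set (Fin m) :=
  {i | ∃ j k, pos {u i, u j, u k} = Set.univ}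

/-- Indices `i` with `uᵢ ∈ U_□`. -/
def SqIdx {m : ℕ} (u : Fin m → V2) : Set (Fin m) :=
  {i | ¬ ∃ j k, pos {u i, u j, u k} = Set.univ}

/-- Indices `k` with `u_k ∈ U_{□,uᵢ}`: `u_k` together with some `u_l` completes
`{uᵢ, -uᵢ}` to a positively spanning quadruple. -/
def SqAdj {m : ℕ} (u : Fin m → V2) (i : Fin m) : Set (Fin m) :=
  {k | ∃ l, pos {u i, -u i, u k, u l} = Set.univ}

lemma exists_between_finset {ι : Type*} (A B : Finset ι) (g : ι → ℝ)
    (h : ∀ j ∈ A, ∀ k ∈ B, g j ≤ g k) :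
    ∃ c : ℝ, (∀ j ∈ A, g j ≤ c) ∧ (∀ k ∈ B, c ≤ g k) := by
  rcases A.eq_empty_or_nonempty with hA | hA
  · rcases B.eq_empty_or_nonempty with hB | hB
    · exact ⟨0, by simp [hA], by simp [hB]⟩
    · exact ⟨B.inf' hB g, by simp [hA], fun k hk => Finset.inf'_le g hk⟩
  · exact ⟨A.sup' hA g, fun j hj => Finset.le_sup' g hj,
      fun k hk => Finset.sup'_le hA g (fun j hj => h j hj k hk)⟩

lemma bddAbove_of_convex {S : Set ℝ} (hc : Convex ℝ S) (hne : S.Nonempty)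
    (hfin : volume S ≠ ⊤) : BddAbove S := by
  by_contra hub
  obtain ⟨y0, hy0⟩ := hne
  obtain ⟨y, hyS, hy⟩ := not_bddAbove_iff.1 hub (y0 + (volume S).toReal + 1)
  have h1 : volume (Icc y0 y) ≤ volume S := measure_mono (hc.ordConnected.out hy0 hyS)
  rw [Real.volume_Icc] at h1
  have h2 : volume S < ENNReal.ofReal (y - y0) := by
    rw [ENNReal.lt_ofReal_iff_toReal_lt hfin]; linarith
  exact absurd h1 h2.not_ge

lemma bddBelow_of_convex {S : Set ℝ} (hc : Convex ℝ S) (hne : S.Nonempty)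
    (hfin : volume S ≠ ⊤) : BddBelow S := by
  by_contra hub
  obtain ⟨y0, hy0⟩ := hne
  obtain ⟨y, hyS, hy⟩ := not_bddBelow_iff.1 hub (y0 - (volume S).toReal - 1)
  have h1 : volume (Icc y y0) ≤ volume S := measure_mono (hc.ordConnected.out hyS hy0)
  rw [Real.volume_Icc] at h1
  have h2 : volume S < ENNReal.ofReal (y0 - y) := by
    rw [ENNReal.lt_ofReal_iff_toReal_lt hfin]; linarith
  exact absurd h1 h2.not_ge

lemma lint_linear (b c : ℝ) (hb : 0 ≤ b) (hc : 0 ≤ c) :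
    ∫⁻ t in Icc 0 b, ENNReal.ofReal (c * t) = ENNReal.ofReal (c * (b ^ 2 / 2)) := by
  rw [← MeasureTheory.ofReal_integral_eq_lintegral_ofReal]
  · congr 1
    rw [MeasureTheory.integral_Icc_eq_integral_Ioc,
      ← intervalIntegral.integral_of_le hb, intervalIntegral.integral_const_mul,
      integral_id]
    ring
  · exact (continuous_const.mul continuous_id).integrableOn_Icc
  · filter_upwards [ae_restrict_mem measurableSet_Icc] with t ht
    exact mul_nonneg hc ht.1

lemma key_estimate {m : ℕ} (a s b : Fin m → ℝ) (i : Fin m)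
    (hbnn : ∀ k, 0 ≤ b k)
    (hnorm : ∀ k, a k ^ 2 + s k ^ 2 = 1)
    (hone : ∀ k, s k = 0 → a k = 1 → b i ≤ b k)
    (hdet : ∀ j k, 0 < s j → s k < 0 → 0 ≤ a k * s j - s k * a j) :
    2 * volume (convexHull ℝ (insert (0 : ℝ × ℝ)
      {z ∈ ⋂ k, {z : ℝ × ℝ | a k * z.1 + s k * z.2 ≤ b k} | z.1 = b i})) ≤
    volume (⋂ k, {z : ℝ × ℝ | a k * z.1 + s k * z.2 ≤ b k}) := by
  classical
  set P' : Set (ℝ × ℝ) := ⋂ k, {z : ℝ × ℝ | a k * z.1 + s k * z.2 ≤ b k} with hP'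
  set F' : Set (ℝ × ℝ) := {z ∈ P' | z.1 = b i} with hF'
  set K' : Set (ℝ × ℝ) := convexHull ℝ (insert (0 : ℝ × ℝ) F') with hK'
  have hP'closed : IsClosed P' :=
    isClosed_iInter fun k => isClosed_le (by fun_prop) continuous_const
  have hP'meas : MeasurableSet P' := hP'closed.measurableSet
  have hfub : ∀ A : Set (ℝ × ℝ), MeasurableSet A →
      volume A = ∫⁻ t, volume {y | (t, y) ∈ A} := by
    intro A hA
    rw [Measure.volume_eq_prod ℝ ℝ, Measure.prod_apply hA]
    rfl
  set S : Set ℝ := ⋂ k, {y : ℝ | a k * b i + s k * y ≤ b k} with hS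
  -- Step B : every slice over [0, b i] contains a translate of the top slice
  have hslice : ∀ t ∈ Icc (0:ℝ) (b i), volume S ≤ volume {y | (t, y) ∈ P'} := by
    intro t ht
    obtain ⟨d, hd0, hd⟩ : ∃ d : ℝ, 0 ≤ d ∧ d = b i - t :=
      ⟨b i - t, by linarith [ht.2], rfl⟩
    have hpair : ∀ j ∈ (Finset.univ.filter fun k => s k < 0),
        ∀ k ∈ (Finset.univ.filter fun k => 0 < s k),
        a j * d / s j ≤ a k * d / s k := by
      intro j hj k hk
      simp only [Finset.mem_filter] at hj hk
      have hsj : s j < 0 := hj.2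
      have hsk : 0 < s k := hk.2
      have hD : 0 ≤ a j * s k - s j * a k := hdet k j hsk hsj
      have e1 : a j * d / s j = -(a j * d) / (-(s j)) := by
        rw [neg_div_neg_eq]
      rw [e1, div_le_div_iff₀ (by linarith) hsk]
      nlinarith [mul_nonneg hd0 hD]
    obtain ⟨c, hcL, hcU⟩ := exists_between_finset _ _ _ hpair
    calc volume S = volume ((fun y => y + c) '' S) := by
          rw [Set.image_add_right, measure_preimage_add_right]
      _ ≤ volume {y | (t, y) ∈ P'} := measure_mono ?_
    rintro _ ⟨y, hyS, rfl⟩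
    simp only [mem_setOf_eq, hP', mem_iInter]
    intro k
    have hyk : a k * b i + s k * y ≤ b k := by
      rw [hS] at hyS; exact mem_iInter.1 hyS k
    have key : s k * c ≤ a k * d ∨ (s k = 0) := by
      rcases lt_trichotomy (s k) 0 with hsk | hsk | hsk
      · left
        have hgc : a k * d / s k ≤ c := hcL k (by simp [hsk])
        have h1 := mul_le_mul_of_nonpos_left hgc (le_of_lt hsk)
        have h2 : s k * (a k * d / s k) = a k * d := by
          rw [mul_comm, div_mul_cancel₀ _ (ne_of_lt hsk)]
        linarith
      · right; exact hsk
      · left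
        have hgc : c ≤ a k * d / s k := hcU k (by simp [hsk])
        have h1 := mul_le_mul_of_nonneg_left hgc (le_of_lt hsk)
        have h2 : s k * (a k * d / s k) = a k * d := by
          rw [mul_comm, div_mul_cancel₀ _ (ne_of_gt hsk)]
        linarith
    rcases key with hkey | hsk0
    · have hex : a k * t + s k * (y + c) = (a k * b i + s k * y) - a k * d + s k * c := by
        rw [hd]; ring
      rw [hex]; linarith
    · have ha2 : (a k - 1) * (a k + 1) = 0 := by
        have := hnorm k; rw [hsk0] at this; nlinarith
      rcases mul_eq_zero.1 ha2 with h1 | h1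
      · have hak : a k = 1 := by linarith
        have hbk := hone k hsk0 hak
        rw [hsk0, hak]
        have := ht.2
        linarith
      · have hak : a k = -1 := by linarith
        rw [hsk0, hak]
        have := ht.1
        have := hbnn k
        linarith
  have hPB : ENNReal.ofReal (b i) * volume S ≤ volume P' := by
    have hpt : ∀ t, (Icc (0:ℝ) (b i)).indicator (fun _ => volume S) t ≤
        volume {y | (t, y) ∈ P'} := by
      intro t
      by_cases ht : t ∈ Icc (0:ℝ) (b i)
      · rw [Set.indicator_of_mem ht]; exact hslice t ht
      · rw [Set.indicator_of_notMem ht]; exact zero_le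
    calc ENNReal.ofReal (b i) * volume S
        = ∫⁻ t, (Icc (0:ℝ) (b i)).indicator (fun _ => volume S) t := by
          rw [lintegral_indicator measurableSet_Icc, setLIntegral_const,
            Real.volume_Icc, sub_zero, mul_comm]
      _ ≤ ∫⁻ t, volume {y | (t, y) ∈ P'} := lintegral_mono hpt
      _ = volume P' := (hfub P' hP'meas).symm
  by_cases hPtop : volume P' = ⊤
  · rw [hPtop]; exact le_top
  by_cases hb0 : b i = 0
  · -- degenerate: the cone lies in a vertical line
    have hsub : K' ⊆ {z : ℝ × ℝ | z.1 = 0} := by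
      rw [hK']
      apply convexHull_min
      · apply insert_subset
        · simp
        · intro z hz
          rw [hF'] at hz
          simp only [mem_setOf_eq] at hz ⊢
          rw [hz.2, hb0]
      · intro x hx y hy p q hp hq hpq
        simp only [mem_setOf_eq] at hx hy ⊢
        simp [Prod.fst_add, Prod.smul_fst, smul_eq_mul, hx, hy]
    have hzero : volume {z : ℝ × ℝ | z.1 = 0} = 0 := by
      have he : {z : ℝ × ℝ | z.1 = 0} = ({0} : Set ℝ) ×ˢ (univ : Set ℝ) := by
        ext z
        simp only [Set.mem_prod, mem_singleton_iff, mem_univ, and_true, mem_setOf_eq]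
      rw [he, Measure.volume_eq_prod ℝ ℝ, Measure.prod_prod, Real.volume_singleton, zero_mul]
    have hKz : volume K' = 0 :=
      le_antisymm (le_trans (measure_mono hsub) hzero.le) zero_le
    rw [hKz, mul_zero]; exact zero_le
  have hbpos : 0 < b i := lt_of_le_of_ne (hbnn i) (Ne.symm hb0)
  have hSfin : volume S ≠ ⊤ := by
    intro hs
    apply hPtop
    have h := hPB
    rw [hs, ENNReal.mul_top (by simpa using (ENNReal.ofReal_pos.2 hbpos).ne')] at h
    exact top_le_iff.1 h
  by_cases hSne : S.Nonempty
  swap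
  · -- empty face
    have hF'e : F' = ∅ := by
      rw [hF']
      ext z
      simp only [mem_setOf_eq, mem_empty_iff_false, iff_false, not_and]
      intro hzP hz1
      apply hSne
      refine ⟨z.2, ?_⟩
      rw [hS]
      apply mem_iInter.2
      intro k
      have := mem_iInter.1 (hP' ▸ hzP) k
      simpa [hz1] using this
    have hK0 : K' = {(0 : ℝ × ℝ)} := by
      rw [hK', hF'e]
      simp [convexHull_singleton]
    have : volume K' = 0 := by
      rw [hK0]
      have he : ({(0 : ℝ × ℝ)} : Set (ℝ × ℝ)) = ({0} : Set ℝ) ×ˢ ({0} : Set ℝ) := by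
        ext z; simp [Set.mem_prod, Prod.ext_iff]
      rw [he, Measure.volume_eq_prod ℝ ℝ, Measure.prod_prod, Real.volume_singleton, zero_mul]
    rw [this, mul_zero]; exact zero_le
  -- main case
  have hSconv : Convex ℝ S := by
    rw [hS]
    apply convex_iInter
    intro k
    have he : {y : ℝ | a k * b i + s k * y ≤ b k} = {y : ℝ | s k * y ≤ b k - a k * b i} := by
      ext y; simp only [mem_setOf_eq]; constructor <;> intro <;> linarith
    rw [he]
    exact convex_halfSpace_le (IsLinearMap.isLinearMap_smul (s k)) _
  have hSclosed : IsClosed S :=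
    isClosed_iInter fun k => isClosed_le (by fun_prop) continuous_const
  have hbddA : BddAbove S := bddAbove_of_convex hSconv hSne hSfin
  have hbddB : BddBelow S := bddBelow_of_convex hSconv hSne hSfin
  set mm := sInf S with hmm
  set MM := sSup S with hMM
  have hmmS : mm ∈ S := hSclosed.csInf_mem hSne hbddB
  have hMMS : MM ∈ S := hSclosed.csSup_mem hSne hbddA
  have hSIcc : S = Icc mm MM :=
    le_antisymm (fun x hx => ⟨csInf_le hbddB hx, le_csSup hbddA hx⟩)
      (hSconv.ordConnected.out hmmS hMMS)
  have hmle : mm ≤ MM := by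
    obtain ⟨y, hy⟩ := hSne
    exact le_trans (csInf_le hbddB hy) (le_csSup hbddA hy)
  set C : Set (ℝ × ℝ) :=
    {z : ℝ × ℝ | 0 ≤ z.1 ∧ z.1 ≤ b i ∧ mm / b i * z.1 ≤ z.2 ∧ z.2 ≤ MM / b i * z.1} with hC
  have hCconv : Convex ℝ C := by
    intro x hx y hy p q hp hq hpq
    obtain ⟨h1, h2, h3, h4⟩ := hx
    obtain ⟨g1, g2, g3, g4⟩ := hy
    have e5 : (p + q) * b i = b i := by rw [hpq, one_mul]
    have e1 : (p • x + q • y).1 = p * x.1 + q * y.1 := rfl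
    have e2 : (p • x + q • y).2 = p * x.2 + q * y.2 := rfl
    refine ⟨?_, ?_, ?_, ?_⟩
    · rw [e1]; exact add_nonneg (mul_nonneg hp h1) (mul_nonneg hq g1)
    · rw [e1]
      have c1 := mul_le_mul_of_nonneg_left h2 hp
      have c2 := mul_le_mul_of_nonneg_left g2 hq
      linarith
    · rw [e1, e2]
      have c1 := mul_le_mul_of_nonneg_left h3 hp
      have c2 := mul_le_mul_of_nonneg_left g3 hq
      linarith
    · rw [e1, e2]
      have c1 := mul_le_mul_of_nonneg_left h4 hp
      have c2 := mul_le_mul_of_nonneg_left g4 hq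
      linarith
  have hKC : K' ⊆ C := by
    rw [hK']
    apply convexHull_min ?_ hCconv
    apply insert_subset
    · refine ⟨le_refl 0, hbpos.le, ?_, ?_⟩ <;> simp
    · intro z hz
      rw [hF'] at hz
      obtain ⟨hzP, hz1⟩ := hz
      have hz2 : z.2 ∈ S := by
        rw [hS]
        apply mem_iInter.2
        intro k
        have := mem_iInter.1 (hP' ▸ hzP) k
        simpa [hz1] using this
      rw [hSIcc] at hz2
      refine ⟨by rw [hz1]; exact hbpos.le, le_of_eq hz1, ?_, ?_⟩
      · rw [hz1, div_mul_cancel₀ _ (ne_of_gt hbpos)]; exact hz2.1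
      · rw [hz1, div_mul_cancel₀ _ (ne_of_gt hbpos)]; exact hz2.2
  have hCclosed : IsClosed C := by
    have : C = {z : ℝ × ℝ | 0 ≤ z.1} ∩ ({z : ℝ × ℝ | z.1 ≤ b i} ∩
        ({z : ℝ × ℝ | mm / b i * z.1 ≤ z.2} ∩ {z : ℝ × ℝ | z.2 ≤ MM / b i * z.1})) := by
      ext z; simp only [hC, mem_setOf_eq, mem_inter_iff, and_assoc]
    rw [this]
    exact (isClosed_le continuous_const continuous_fst).inter
      ((isClosed_le continuous_fst continuous_const).inter
        ((isClosed_le (by fun_prop) continuous_snd).inter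
          (isClosed_le continuous_snd (by fun_prop))))
  have hCvol : volume C = ENNReal.ofReal ((MM - mm) / b i * (b i ^ 2 / 2)) := by
    rw [hfub C hCclosed.measurableSet]
    have hsl : ∀ t, volume {y | (t, y) ∈ C} =
        (Icc (0:ℝ) (b i)).indicator (fun t => ENNReal.ofReal ((MM - mm) / b i * t)) t := by
      intro t
      by_cases ht : t ∈ Icc (0:ℝ) (b i)
      · rw [Set.indicator_of_mem ht]
        have he : {y | (t, y) ∈ C} = Icc (mm / b i * t) (MM / b i * t) := by
          ext y
          simp only [hC, mem_setOf_eq, mem_Icc]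
          constructor
          · rintro ⟨_, _, h3, h4⟩; exact ⟨h3, h4⟩
          · rintro ⟨h3, h4⟩; exact ⟨ht.1, ht.2, h3, h4⟩
        rw [he, Real.volume_Icc]
        congr 1; ring
      · rw [Set.indicator_of_notMem ht]
        have he : {y | (t, y) ∈ C} = ∅ := by
          ext y
          simp only [hC, mem_setOf_eq, mem_empty_iff_false, iff_false, not_and]
          intro h1 h2
          exact absurd ⟨h1, h2⟩ ht
        rw [he]; exact measure_empty
    rw [lintegral_congr hsl, lintegral_indicator measurableSet_Icc]
    exact lint_linear (b i) ((MM - mm) / b i) hbpos.le (div_nonneg (by linarith) hbpos.le)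
  calc 2 * volume K' ≤ 2 * volume C := mul_le_mul_right (measure_mono hKC) 2
    _ = ENNReal.ofReal (b i) * volume S := by
        have hvs : volume S = ENNReal.ofReal (MM - mm) := by rw [hSIcc, Real.volume_Icc]
        have h2e : (2 : ℝ≥0∞) = ENNReal.ofReal 2 := by norm_num
        rw [hCvol, hvs, h2e, ← ENNReal.ofReal_mul (by norm_num : (0:ℝ) ≤ 2),
          ← ENNReal.ofReal_mul hbpos.le]
        congr 1
        field_simp
    _ ≤ volume P' := hPB

lemma pos_eq_univ {u v w : V2} (h1 : u ≠ v) (h2 : u ≠ w) (h3 : v ≠ w)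
    (l2 l3 : ℝ) (hl2 : 0 < l2) (hl3 : 0 < l3)
    (hsum : u + l2 • v + l3 • w = 0)
    (hspan : ∀ x : V2, ∃ p q : ℝ, x = p • u + q • v) :
    pos {u, v, w} = Set.univ := by
  classical
  apply Set.eq_univ_iff_forall.2
  intro x
  obtain ⟨p, q, hpq⟩ := hspan x
  set T : ℝ := max (max (-p) (-q / l2)) 0 with hT
  have hT0 : 0 ≤ T := le_max_right _ _
  have hTp : -p ≤ T := le_trans (le_max_left _ _) (le_max_left _ _)
  have hTq : -q / l2 ≤ T := le_trans (le_max_right _ _) (le_max_left _ _)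
  have hqT : 0 ≤ q + T * l2 := by
    have h := mul_le_mul_of_nonneg_right hTq (le_of_lt hl2)
    rw [div_mul_cancel₀ _ (ne_of_gt hl2)] at h
    linarith
  refine ⟨{u, v, w}, fun z => if z = u then p + T else if z = v then q + T * l2
      else if z = w then T * l3 else 0, ?_, ?_, ?_⟩
  · intro z hz
    simpa using hz
  · intro z
    dsimp only
    split_ifs
    · linarith
    · exact hqT
    · exact mul_nonneg hT0 hl3.le
    · exact le_refl 0
  · rw [Finset.sum_insert (by simp [h1, h2]), Finset.sum_insert (by simp [h3]),
      Finset.sum_singleton]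
    dsimp only
    rw [if_pos rfl, if_neg (Ne.symm h1), if_pos rfl, if_neg (Ne.symm h2),
      if_neg (Ne.symm h3), if_pos rfl]
    have key : (p + T) • u + ((q + T * l2) • v + (T * l3) • w)
        = (p • u + q • v) + T • (u + l2 • v + l3 • w) := by module
    rw [key, hsum, smul_zero, add_zero, hpq]

set_option maxHeartbeats 2000000 in
/-- If `uᵢ ∈ U_□`, then every cone-volume vector `γ ∈ C_cv(U)` satisfies `γᵢ ≤ 1/2`. -/
theorem stmt13 (m : ℕ) (u : Fin m → V2)
    (hunit : ∀ k, ‖u k‖ = 1) (hinj : Function.Injective u)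
    (hpos : pos (Set.range u) = Set.univ)
    (i : Fin m) (hi : i ∈ SqIdx u) :
    ∀ γ ∈ Ccv u, γ i ≤ 1 / 2 := by
  classical
  rintro γ ⟨b, hbnn, hPvol, rfl⟩
  -- an orthonormal basis adapted to `u i`
  set u0 : V2 := u i with hu0
  set ub : V2 := (WithLp.toLp 2 (fun j : Fin 2 => if j = 0 then -(u0 1) else u0 0) : EuclideanSpace ℝ (Fin 2)) with hub
  have hinnerf : ∀ x y : V2, ⟪x, y⟫ = x 0 * y 0 + x 1 * y 1 := by
    intro x y
    simp [PiLp.inner_apply, Fin.sum_univ_two, RCLike.inner_apply, conj_trivial]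
    ring
  have hsq : u0 0 * u0 0 + u0 1 * u0 1 = 1 := by
    have h2 : (u0 0) ^ 2 + (u0 1) ^ 2 = 1 := by
      have h3 := congrArg (fun r : ℝ => r ^ 2) (hunit i)
      rw [EuclideanSpace.norm_eq] at h3
      simp only [one_pow] at h3
      rw [Real.sq_sqrt (by positivity)] at h3
      simpa [Fin.sum_univ_two] using h3
    nlinarith [h2]
  have horth : Orthonormal ℝ ![u0, ub] := by
    rw [orthonormal_iff_ite]
    intro j k
    fin_cases j <;> fin_cases k <;> rw [hinnerf] <;>
      simp [hinnerf, hub, Matrix.cons_val_zero, Matrix.cons_val_one, Matrix.head_cons] <;>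
      nlinarith [hsq]
  have hcard : Fintype.card (Fin 2) = Module.finrank ℝ V2 := by
    simp [finrank_euclideanSpace_fin]
  set B : OrthonormalBasis (Fin 2) ℝ V2 :=
    OrthonormalBasis.mk horth
      (horth.linearIndependent.span_eq_top_of_card_eq_finrank hcard).ge with hB
  have hB0 : B 0 = u0 := by simp [hB, OrthonormalBasis.coe_mk]
  have hB1 : B 1 = ub := by simp [hB, OrthonormalBasis.coe_mk]
  have hexp : ∀ x : V2, x = ⟪u0, x⟫ • u0 + ⟪ub, x⟫ • ub := by
    intro x
    have h := B.sum_repr' x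
    rw [Fin.sum_univ_two, hB0, hB1] at h
    exact h.symm
  set a : Fin m → ℝ := fun k => ⟪u0, u k⟫ with ha
  set s : Fin m → ℝ := fun k => ⟪ub, u k⟫ with hs
  have hip : ∀ (k : Fin m) (x : V2), ⟪u k, x⟫ = a k * ⟪u0, x⟫ + s k * ⟪ub, x⟫ := by
    intro k x
    conv_lhs => rw [hexp (u k)]
    rw [inner_add_left, real_inner_smul_left, real_inner_smul_left]
  -- the measure-preserving identification of V2 with ℝ × ℝ
  set e : V2 ≃ᵐ ℝ × ℝ :=
    (B.measurableEquiv).trans (((MeasurableEquiv.toLp 2 (Fin 2 → ℝ)).symm).trans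
      (MeasurableEquiv.piFinTwo fun _ => ℝ)) with he_def
  have he : ∀ x : V2, e x = (⟪u0, x⟫, ⟪ub, x⟫) := by
    intro x
    have h0 : e x = ((B.repr x) 0, (B.repr x) 1) := rfl
    rw [h0, B.repr_apply_apply, B.repr_apply_apply, hB0, hB1]
  have hmp : MeasurePreserving e volume volume :=
    ((MeasureTheory.volume_preserving_piFinTwo (fun _ : Fin 2 => ℝ)).comp
      (EuclideanSpace.volume_preserving_symm_measurableEquiv_toLp (Fin 2))).comp
      B.measurePreserving_measurableEquiv
  have hpre : ∀ A : Set (ℝ × ℝ), volume (e ⁻¹' A) = volume A := fun A =>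
    hmp.measure_preimage_equiv A
  -- transported polyhedron and face
  set P' : Set (ℝ × ℝ) := ⋂ k, {z : ℝ × ℝ | a k * z.1 + s k * z.2 ≤ b k} with hP'
  set F' : Set (ℝ × ℝ) := {z ∈ P' | z.1 = b i} with hF'
  have hPP : polyP u b = e ⁻¹' P' := by
    ext x
    simp only [polyP, mem_setOf_eq, mem_preimage, hP', mem_iInter]
    refine forall_congr' fun k => ?_
    rw [he x]
    rw [hip k x]
  have hFF : faceF u b i = e ⁻¹' F' := by
    ext x
    simp only [faceF, mem_setOf_eq, mem_preimage, hF']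
    rw [he x]
    constructor
    · rintro ⟨hxP, hx1⟩
      refine ⟨by rw [hPP] at hxP; simpa [he x] using hxP, hx1⟩
    · rintro ⟨hxP, hx1⟩
      refine ⟨by rw [hPP]; simpa [he x] using hxP, hx1⟩
  -- transported cone
  set ψL : V2 →ₗ[ℝ] ℝ × ℝ :=
    LinearMap.prod (innerSL ℝ u0).toLinearMap (innerSL ℝ ub).toLinearMap with hψL
  have heψ : ⇑e = ⇑ψL := funext fun x => by rw [he x]; rfl
  have hKK : convexHull ℝ (insert 0 (faceF u b i))
      = e ⁻¹' (convexHull ℝ (insert (0 : ℝ × ℝ) F')) := by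
    have him : ⇑e '' (faceF u b i) = F' := by
      rw [hFF, Set.image_preimage_eq _ e.surjective]
    have h2 : ⇑e '' (convexHull ℝ (insert 0 (faceF u b i)))
        = convexHull ℝ (insert (0 : ℝ × ℝ) F') := by
      rw [heψ] at him ⊢
      rw [ψL.image_convexHull, Set.image_insert_eq, map_zero, him]
    rw [← h2, Set.preimage_image_eq _ e.injective]
  -- hypotheses of the key estimate
  have hnorm : ∀ k, a k ^ 2 + s k ^ 2 = 1 := by
    intro k
    have h := hip k (u k)
    have hn : ⟪u k, u k⟫ = 1 := by
      rw [real_inner_self_eq_norm_mul_norm, hunit k, one_mul]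
    have ha2 : ⟪u0, u k⟫ = a k := rfl
    have hs2 : ⟪ub, u k⟫ = s k := rfl
    rw [hn, ha2, hs2] at h
    nlinarith [h]
  have hone : ∀ k, s k = 0 → a k = 1 → b i ≤ b k := by
    intro k hs0 ha1
    have hexpk : u k = a k • u0 + s k • ub := hexp (u k)
    rw [ha1, hs0, one_smul, zero_smul, add_zero] at hexpk
    have : k = i := hinj hexpk
    rw [this]
  have hdet : ∀ j k, 0 < s j → s k < 0 → 0 ≤ a k * s j - s k * a j := by
    intro j k hsj hsk
    by_contra hcon
    push_neg at hcon
    apply hi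
    set D : ℝ := a j * s k - a k * s j with hD
    have hDpos : 0 < D := by simp only [hD]; linarith
    have hexpj : u j = a j • u0 + s j • ub := hexp (u j)
    have hexpk : u k = a k • u0 + s k • ub := hexp (u k)
    have hperp : ⟪ub, u0⟫ = 0 := by
      have := horth.2 (by decide : (1 : Fin 2) ≠ 0)
      simpa [hB0, hB1, Matrix.cons_val_zero, Matrix.cons_val_one, Matrix.head_cons] using this
    have hne1 : u0 ≠ u j := by
      intro h
      have : s j = 0 := by rw [hs]; simp only; rw [← h, hperp]
      linarith
    have hne2 : u0 ≠ u k := by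
      intro h
      have : s k = 0 := by rw [hs]; simp only; rw [← h, hperp]
      linarith
    have hne3 : u j ≠ u k := by
      intro h
      have : s j = s k := by rw [hs]; simp only; rw [h]
      linarith
    have hsum : u0 + (-(s k) / D) • u j + (s j / D) • u k = 0 := by
      rw [hexpj, hexpk]
      have hu0e : u0 = (1 : ℝ) • u0 + (0 : ℝ) • ub := by module
      rw [hu0e]
      match_scalars
      · field_simp
        simp only [hD]
        ring
      · field_simp
        ring
    have hl2 : 0 < -(s k) / D := div_pos (by linarith) hDpos
    have hl3 : 0 < s j / D := div_pos hsj hDpos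
    have hspan : ∀ x : V2, ∃ p q : ℝ, x = p • u0 + q • u j := by
      intro x
      refine ⟨⟪u0, x⟫ - ⟪ub, x⟫ * a j / s j, ⟪ub, x⟫ / s j, ?_⟩
      conv_lhs => rw [hexp x]
      rw [hexpj]
      match_scalars
      · field_simp
        ring
      · field_simp
    exact ⟨j, k, pos_eq_univ hne1 hne2 hne3 _ _ hl2 hl3 hsum hspan⟩
  -- apply the key estimate
  have hkey := key_estimate a s b i hbnn hnorm hone hdet
  -- identify the volumes
  have hvolP : volume (polyP u b) = volume P' := by rw [hPP]; exact hpre P'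
  have hvolK : volume (convexHull ℝ (insert 0 (faceF u b i)))
      = volume (convexHull ℝ (insert (0 : ℝ × ℝ) F')) := by
    rw [hKK]; exact hpre _
  have hfin : volume (polyP u b) ≠ ⊤ := by
    intro h
    rw [h] at hPvol
    simp at hPvol
  have hP1 : volume P' = 1 := by
    rw [← hvolP, ← ENNReal.ofReal_toReal hfin, hPvol]
    simp
  have h2 : 2 * volume (convexHull ℝ (insert 0 (faceF u b i))) ≤ 1 := by
    rw [hvolK]
    calc 2 * volume (convexHull ℝ (insert (0 : ℝ × ℝ) F')) ≤ volume P' := hkey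
      _ = 1 := hP1
  have h3 : volume (convexHull ℝ (insert 0 (faceF u b i))) ≤ 1 / 2 := by
    rw [ENNReal.le_div_iff_mul_le (Or.inl two_ne_zero) (Or.inl ENNReal.ofNat_ne_top)]
    rw [mul_comm]
    exact h2
  have h4 := ENNReal.toReal_mono (by norm_num : (1 / 2 : ℝ≥0∞) ≠ ⊤) h3
  rw [show ((1 : ℝ≥0∞) / 2).toReal = 1 / 2 by norm_num] at h4
  simpa [cv] using h4
end
end

section
/- Let U ⊆ S¹ ⊂ ℝ² be a finite set of pairwise distinct unit vectors in general position (any two are linearly independent) with pos(U) = ℝ² and |U| ≥ 3. Then U = U_Δ, i.e., for every u ∈ U there exist v, w ∈ U with pos{u, v, w} = ℝ². -/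
open RealInnerProductSpace

noncomputable section

lemma span_pair' (v w : V2) (h : LinearIndependent ℝ ![v, w]) (x : V2) :
    ∃ a b : ℝ, x = a • v + b • w := by
  have hcard : Fintype.card (Fin 2) = Module.finrank ℝ V2 := by
    simp [finrank_euclideanSpace]
  have htop := h.span_eq_top_of_card_eq_finrank hcard
  have hx : x ∈ Submodule.span ℝ {v, w} := by
    have hr : Set.range ![v, w] = {v, w} := by
      simp [Matrix.range_cons, Matrix.range_empty, Set.pair_comm]
    rw [← hr, htop]; trivial
  obtain ⟨a, b, hab⟩ := Submodule.mem_span_pair.mp hx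
  exact ⟨a, b, hab.symm⟩

lemma carath {U : Set V2}
    (hgen : ∀ v ∈ U, ∀ w ∈ U, v ≠ w → LinearIndependent ℝ ![v, w])
    (u0 : V2) (hu0 : u0 ∈ U) (x : V2) (hx : x ∈ pos U) :
    ∃ v ∈ U, ∃ w ∈ U, ∃ b c : ℝ, 0 ≤ b ∧ 0 ≤ c ∧ x = b • v + c • w := by
  classical
  obtain ⟨s, c, hs, hc, hsum⟩ := hx
  suffices H : ∀ n (s : Finset V2) (c : V2 → ℝ), s.card = n → (↑s : Set V2) ⊆ U →
      (∀ v, 0 ≤ c v) → x = ∑ v ∈ s, c v • v →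
      ∃ v ∈ U, ∃ w ∈ U, ∃ b c : ℝ, 0 ≤ b ∧ 0 ≤ c ∧ x = b • v + c • w by
    exact H s.card s c rfl hs hc hsum
  intro n
  induction n using Nat.strong_induction_on with
  | _ n IH =>
    intro s c hn hs hc hsum
    by_cases hz : ∃ i ∈ s, c i = 0
    · obtain ⟨i, his, hci⟩ := hz
      have hcardlt : (s.erase i).card < n := by
        rw [Finset.card_erase_of_mem his]
        have : 1 ≤ s.card := Finset.card_pos.mpr ⟨i, his⟩
        omega
      refine IH _ hcardlt (s.erase i) c rfl ?_ hc ?_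
      · exact subset_trans (Finset.coe_subset.mpr (Finset.erase_subset _ _)) hs
      · rw [hsum, Finset.sum_erase _ (by simp [hci])]
    · push_neg at hz
      rcases Nat.lt_or_ge n 3 with h3 | h3
      · interval_cases n
        · rw [Finset.card_eq_zero.mp hn] at hsum
          exact ⟨u0, hu0, u0, hu0, 0, 0, le_refl _, le_refl _, by simpa using hsum⟩
        · obtain ⟨a, rfl⟩ := Finset.card_eq_one.mp hn
          refine ⟨a, hs (by simp), a, hs (by simp), c a, 0, hc a, le_refl _, ?_⟩
          simpa using hsum
        · obtain ⟨a, b, hab, rfl⟩ := Finset.card_eq_two.mp hn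
          refine ⟨a, hs (by simp), b, hs (by simp), c a, c b, hc a, hc b, ?_⟩
          rw [hsum, Finset.sum_pair hab]
      · -- at least three elements, all with positive coefficients
        obtain ⟨v1, hv1s⟩ : s.Nonempty := Finset.card_pos.mp (by omega)
        obtain ⟨v2, hv2e⟩ : (s.erase v1).Nonempty := by
          apply Finset.card_pos.mp; rw [Finset.card_erase_of_mem hv1s]; omega
        obtain ⟨v3, hv3e⟩ : ((s.erase v1).erase v2).Nonempty := by
          apply Finset.card_pos.mp
          rw [Finset.card_erase_of_mem hv2e, Finset.card_erase_of_mem hv1s]; omega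
        have hv2s : v2 ∈ s := Finset.mem_of_mem_erase hv2e
        have hv21 : v2 ≠ v1 := Finset.ne_of_mem_erase hv2e
        have hv32 : v3 ≠ v2 := Finset.ne_of_mem_erase hv3e
        have hv3e' : v3 ∈ s.erase v1 := Finset.mem_of_mem_erase hv3e
        have hv31 : v3 ≠ v1 := Finset.ne_of_mem_erase hv3e'
        have hv3s : v3 ∈ s := Finset.mem_of_mem_erase hv3e'
        have hli : LinearIndependent ℝ ![v1, v2] :=
          hgen v1 (hs hv1s) v2 (hs hv2s) (Ne.symm hv21)
        obtain ⟨α, β, hv3eq⟩ := span_pair' v1 v2 hli v3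
        set d : V2 → ℝ := fun y =>
          if y = v1 then α else if y = v2 then β else if y = v3 then -1 else 0 with hd
        have hdsupp : ∀ y, y ∉ s → d y = 0 := by
          intro y hy
          have h1 : y ≠ v1 := fun h => hy (h ▸ hv1s)
          have h2 : y ≠ v2 := fun h => hy (h ▸ hv2s)
          have h3 : y ≠ v3 := fun h => hy (h ▸ hv3s)
          simp [hd, h1, h2, h3]
        have hdsum : ∑ y ∈ s, d y • y = 0 := by
          have hsub : ({v1, v2, v3} : Finset V2) ⊆ s := by
            intro y hy
            simp only [Finset.mem_insert, Finset.mem_singleton] at hy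
            rcases hy with rfl | rfl | rfl <;> assumption
          rw [← Finset.sum_subset hsub (fun y _ hy => ?_)]
          · have hn1 : v1 ∉ ({v2, v3} : Finset V2) := by
              simp [Ne.symm hv21, Ne.symm hv31]
            have hn2 : v2 ∉ ({v3} : Finset V2) := by simp [Ne.symm hv32]
            rw [Finset.sum_insert hn1, Finset.sum_insert hn2, Finset.sum_singleton]
            have e1 : d v1 = α := by simp [hd]
            have e2 : d v2 = β := by simp [hd, hv21]
            have e3 : d v3 = -1 := by simp [hd, hv31, hv32]
            rw [e1, e2, e3, hv3eq]
            module
          · simp only [Finset.mem_insert, Finset.mem_singleton, not_or] at hy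
            obtain ⟨h1, h2, h3⟩ := hy
            simp [hd, h1, h2, h3]
        obtain ⟨e, hesum, hesupp, i1, hi1s, hi1⟩ :
            ∃ e : V2 → ℝ, (∑ y ∈ s, e y • y = 0) ∧ (∀ y, y ∉ s → e y = 0) ∧
              ∃ i ∈ s, 0 < e i := by
          rcases lt_or_ge 0 α with hα | hα
          · exact ⟨d, hdsum, hdsupp, v1, hv1s, by simpa [hd] using hα⟩
          rcases lt_or_ge 0 β with hβ | hβ
          · exact ⟨d, hdsum, hdsupp, v2, hv2s, by simpa [hd, hv21] using hβ⟩
          · refine ⟨fun y => -(d y), ?_, fun y hy => by simp [hdsupp y hy], v3, hv3s, ?_⟩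
            · have : ∑ y ∈ s, (-(d y)) • y = -∑ y ∈ s, d y • y := by
                simp [neg_smul]
              rw [this, hdsum, neg_zero]
            · simp [hd, hv31, hv32]
        set F := s.filter (fun i => 0 < e i) with hF
        have hFne : F.Nonempty := ⟨i1, Finset.mem_filter.mpr ⟨hi1s, hi1⟩⟩
        obtain ⟨i0, hi0F, hmin⟩ := F.exists_min_image (fun i => c i / e i) hFne
        have hi0s : i0 ∈ s := (Finset.mem_filter.mp hi0F).1
        have hi0pos : 0 < e i0 := (Finset.mem_filter.mp hi0F).2
        set t := c i0 / e i0 with hT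
        have ht0 : 0 ≤ t := div_nonneg (hc i0) hi0pos.le
        set c' : V2 → ℝ := fun y => c y - t * e y with hc'def
        have hc' : ∀ y, 0 ≤ c' y := by
          intro y
          by_cases hys : y ∈ s
          · rcases lt_or_ge 0 (e y) with hey | hey
            · have hyF : y ∈ F := Finset.mem_filter.mpr ⟨hys, hey⟩
              have hty := hmin y hyF
              rw [le_div_iff₀ hey] at hty
              simp only [hc'def]; linarith
            · have := mul_nonneg ht0 (neg_nonneg.mpr hey)
              simp only [hc'def]; nlinarith [hc y]
          · simp [hc'def, hesupp y hys, hc y]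
        have hci0 : c' i0 = 0 := by
          simp only [hc'def, hT]
          rw [div_mul_cancel₀ _ hi0pos.ne']
          ring
        have hsum' : x = ∑ y ∈ (s.erase i0), c' y • y := by
          rw [Finset.sum_erase _ (by simp [hci0])]
          have h1 : ∑ y ∈ s, c' y • y
              = ∑ y ∈ s, c y • y - t • ∑ y ∈ s, e y • y := by
            rw [Finset.smul_sum, ← Finset.sum_sub_distrib]
            refine Finset.sum_congr rfl fun y _ => ?_
            simp [hc'def, sub_smul, mul_smul]
          rw [h1, hesum, smul_zero, sub_zero, ← hsum]
        have hcardlt : (s.erase i0).card < n := by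
          rw [Finset.card_erase_of_mem hi0s]; omega
        exact IH _ hcardlt (s.erase i0) c' rfl
          (subset_trans (Finset.coe_subset.mpr (Finset.erase_subset _ _)) hs) hc' hsum'

/-- For `U` in general position with `pos U = ℝ²` and `|U| ≥ 3`, every `u ∈ U`
belongs to a positively spanning triple, i.e. `U = U_Δ`. -/
theorem stmt18 (U : Set V2) (hfin : U.Finite) (hunit : ∀ v ∈ U, ‖v‖ = 1)
    (hgen : ∀ v ∈ U, ∀ w ∈ U, v ≠ w → LinearIndependent ℝ ![v, w])
    (hpos : pos U = Set.univ) (hcard : 3 ≤ U.ncard) :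
    ∀ u ∈ U, ∃ v ∈ U, ∃ w ∈ U, pos {u, v, w} = Set.univ := by
  classical
  intro u hu
  have hu1 : ‖u‖ = 1 := hunit u hu
  have hune : u ≠ 0 := by intro h; rw [h] at hu1; simp at hu1
  have hneg : (-u) ∈ pos U := by rw [hpos]; trivial
  obtain ⟨v0, hv0, w0, hw0, b0, c0, hb0, hc0, heq0⟩ := carath hgen u hu (-u) hneg
  -- no single vector can give -u
  have noSingle : ∀ y ∈ U, ∀ s : ℝ, 0 ≤ s → -u ≠ s • y := by
    intro y hy s hs hcontra
    by_cases hyu : y = u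
    · subst hyu
      have : (s + 1) • y = 0 := by
        rw [add_smul, one_smul, ← hcontra]; abel
      have hs1 : (s + 1 : ℝ) ≠ 0 := by linarith
      exact hune (by simpa [hs1] using (smul_eq_zero.mp this).resolve_left hs1)
    · have hli := hgen u hu y hy (fun h => hyu h.symm)
      have h0 : (1 : ℝ) • u + s • y = 0 := by
        rw [one_smul, ← neg_neg u, hcontra]; abel
      have := (LinearIndependent.pair_iff.mp hli 1 s h0).1
      norm_num at this
  have key : ∃ v ∈ U, ∃ w ∈ U, v ≠ w ∧ ∃ b c : ℝ, 0 < b ∧ 0 < c ∧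
      -u = b • v + c • w := by
    by_cases hvw : v0 = w0
    · subst hvw
      exact absurd (by rw [heq0, ← add_smul]) (noSingle v0 hv0 (b0 + c0) (by linarith))
    rcases eq_or_lt_of_le hb0 with hb | hb
    · exact absurd (by rw [heq0, ← hb, zero_smul, zero_add])
        (noSingle w0 hw0 c0 hc0)
    rcases eq_or_lt_of_le hc0 with hc | hc
    · exact absurd (by rw [heq0, ← hc, zero_smul, add_zero])
        (noSingle v0 hv0 b0 hb0)
    exact ⟨v0, hv0, w0, hw0, hvw, b0, c0, hb, hc, heq0⟩
  obtain ⟨v, hv, w, hw, hvw, b, c, hb, hc, heq⟩ := key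
  have hvu : v ≠ u := by
    rintro rfl
    have h0 : (1 + b) • v + c • w = 0 := by
      have hh : (1 + b) • v + c • w = v + (b • v + c • w) := by module
      rw [hh, ← heq]; abel
    have hwv : w ≠ v := Ne.symm hvw
    have hli := hgen v hv w hw hvw
    have := (LinearIndependent.pair_iff.mp hli (1 + b) c h0).1
    linarith
  have hwu : w ≠ u := by
    rintro rfl
    have h0 : b • v + (1 + c) • w = 0 := by
      have hh : b • v + (1 + c) • w = w + (b • v + c • w) := by module
      rw [hh, ← heq]; abel
    have hli := hgen v hv w hw hvw
    have := (LinearIndependent.pair_iff.mp hli b (1 + c) h0).2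
    linarith
  refine ⟨v, hv, w, hw, ?_⟩
  apply Set.eq_univ_iff_forall.mpr
  intro x
  have hli := hgen v hv w hw hvw
  obtain ⟨p, q, hx⟩ := span_pair' v w hli x
  set t := max 0 (max ((-p) / b) ((-q) / c)) with hT
  have ht0 : 0 ≤ t := le_max_left _ _
  have htp : 0 ≤ p + t * b := by
    have h1 : (-p) / b ≤ t := le_trans (le_max_left _ _) (le_max_right _ _)
    rw [div_le_iff₀ hb] at h1; linarith
  have htq : 0 ≤ q + t * c := by
    have h1 : (-q) / c ≤ t := le_trans (le_max_right _ _) (le_max_right _ _)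
    rw [div_le_iff₀ hc] at h1; linarith
  have hu' : u = -(b • v + c • w) := by rw [← heq, neg_neg]
  have hxdecomp : x = t • u + ((p + t * b) • v + (q + t * c) • w) := by
    rw [hx, hu']; module
  refine ⟨{u, v, w},
    fun y => if y = u then t else if y = v then p + t * b else if y = w then q + t * c else 0,
    ?_, ?_, ?_⟩
  · simp only [Finset.coe_insert, Finset.coe_singleton]
    exact subset_rfl
  · intro y
    dsimp only
    split_ifs <;> [exact ht0; exact htp; exact htq; exact le_refl 0]
  · have hnu : u ∉ ({v, w} : Finset V2) := by simp [Ne.symm hvu, Ne.symm hwu]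
    have hnv : v ∉ ({w} : Finset V2) := by simp [hvw]
    rw [show ({u, v, w} : Finset V2) = insert u (insert v {w}) from rfl,
      Finset.sum_insert hnu, Finset.sum_insert hnv, Finset.sum_singleton]
    simp only [if_pos rfl, if_neg hvu, if_neg hwu, if_neg (Ne.symm hvw)]
    exact hxdecomp
end
end
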